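/- Let x_0 < x_1 < ... < x_n be real numbers and for t > 0 let f_t(x) = t^x. Define \psi(t) = [x_0,...,x_n]f_t. Then \psi'(t) = x_0 \cdot [x_0-1, x_1-1, ..., x_n-1]f_t + [x_1-1, ..., x_n-1]f_t. -/

import Mathlib

/-- The divided difference `[x 0, ..., x n] f` at pairwise distinct points,
given by the explicit formula `∑ i, f (x i) / ∏_{j ≠ i} (x i - x j)`. -/
noncomputable def divSum (n : ℕ) (x : Fin (n+1) → ℝ) (f : ℝ → ℝ) : ℝ :=
  ∑ i : Fin (n+1), f (x i) / ∏ j ∈ Finset.univ.erase i, (x i - x j)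

/-- For  and  with ,
. -/
lemma auxProd (m : ℕ) (g : Fin (m+2) → ℝ) (i : Fin (m+1)) :
    ∏ j ∈ Finset.univ.erase i.succ, g j
      = g 0 * ∏ j ∈ Finset.univ.erase i, g j.succ := by
  have h0 : (0 : Fin (m+2)) ∈ Finset.univ.erase i.succ := by
    simp [Fin.ext_iff, (Fin.succ_ne_zero i).symm]
  rw [← Finset.mul_prod_erase _ _ h0]
  congr 1
  rw [show ((Finset.univ.erase i.succ).erase 0) = (Finset.univ.erase i).image Fin.succ by
    ext j
    simp only [Finset.mem_erase, Finset.mem_univ, and_true, Finset.mem_image]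
    constructor
    · rintro ⟨hj0, hji⟩
      refine ⟨j.pred hj0, ?_, by simp⟩
      intro h
      apply hji
      rw [← Fin.succ_pred j hj0, h]
    · rintro ⟨k, hk, rfl⟩
      exact ⟨Fin.succ_ne_zero k, fun h => hk (Fin.succ_injective _ h)⟩]
  rw [Finset.prod_image (fun a _ b _ h => Fin.succ_injective _ h)]

theorem stmt2 (n : ℕ) (hn : 1 ≤ n) (x : Fin (n+1) → ℝ) (hx : StrictMono x)
    (t : ℝ) (ht : 0 < t) :
    HasDerivAt (fun s : ℝ => divSum n x (fun a => s ^ a))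
      (x 0 * divSum n (fun i => x i - 1) (fun a => t ^ a)
        + divSum (n-1) (fun i : Fin (n-1+1) =>
            x ⟨i.val + 1, by have := i.isLt; omega⟩ - 1) (fun a => t ^ a)) t := by
  obtain ⟨m, rfl⟩ : ∃ m, n = m + 1 := ⟨n - 1, by omega⟩
  have hderiv : HasDerivAt (fun s : ℝ => divSum (m+1) x (fun a => s ^ a))
      (∑ i : Fin (m+2), x i * t ^ (x i - 1) / ∏ j ∈ Finset.univ.erase i, (x i - x j)) t := by
    unfold divSum
    exact HasDerivAt.fun_sum fun i _ =>
      (Real.hasDerivAt_rpow_const (Or.inl ht.ne')).div_const _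
  convert hderiv using 1
  unfold divSum
  simp only [sub_sub_sub_cancel_right]
  rw [Finset.mul_sum]
  rw [Fin.sum_univ_succ
    (f := fun i => x 0 * (t ^ (x i - 1) / ∏ j ∈ Finset.univ.erase i, (x i - x j)))]
  rw [Fin.sum_univ_succ
    (f := fun i => x i * t ^ (x i - 1) / ∏ j ∈ Finset.univ.erase i, (x i - x j))]
  have key : ∀ k : Fin (m+1),
      x 0 * (t ^ (x k.succ - 1) / ∏ j ∈ Finset.univ.erase k.succ, (x k.succ - x j))
        + t ^ (x (⟨(k:ℕ) + 1, by omega⟩ : Fin (m+2)) - 1)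
            / ∏ j ∈ Finset.univ.erase k,
                (x (⟨(k:ℕ) + 1, by omega⟩ : Fin (m+2)) - x (⟨(j:ℕ) + 1, by omega⟩ : Fin (m+2)))
      = x k.succ * t ^ (x k.succ - 1)
            / ∏ j ∈ Finset.univ.erase k.succ, (x k.succ - x j) := by
    intro k
    have hk1 : (⟨(k:ℕ) + 1, by omega⟩ : Fin (m+2)) = k.succ := rfl
    rw [hk1]
    have hEj : ∀ j : Fin (m+1),
        (⟨(j:ℕ) + 1, by omega⟩ : Fin (m+2)) = j.succ := fun j => rfl
    simp only [hEj]
    rw [auxProd m (fun j => x k.succ - x j) k]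
    set E := ∏ j ∈ Finset.univ.erase k, (x k.succ - x j.succ) with hE
    have hEne : E ≠ 0 := by
      rw [hE]
      apply Finset.prod_ne_zero_iff.mpr
      intro j hj
      have : j.succ ≠ k.succ := fun h => (Finset.mem_erase.mp hj).1 (Fin.succ_injective _ h)
      exact sub_ne_zero_of_ne (hx.injective.ne (Ne.symm this))
    have ha : x k.succ - x 0 ≠ 0 :=
      sub_ne_zero_of_ne (hx.injective.ne (Fin.succ_ne_zero k))
    field_simp
    ring
  show x 0 * (t ^ (x 0 - 1) / ∏ j ∈ Finset.univ.erase 0, (x 0 - x j)) +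
      (∑ i : Fin (m + 1),
        x 0 * (t ^ (x i.succ - 1) / ∏ j ∈ Finset.univ.erase i.succ, (x i.succ - x j))) +
      ∑ k : Fin (m + 1),
        t ^ (x (⟨(k:ℕ) + 1, by omega⟩ : Fin (m+2)) - 1)
          / ∏ j ∈ Finset.univ.erase k,
              (x (⟨(k:ℕ) + 1, by omega⟩ : Fin (m+2)) - x (⟨(j:ℕ) + 1, by omega⟩ : Fin (m+2)))
    = x 0 * t ^ (x 0 - 1) / ∏ j ∈ Finset.univ.erase 0, (x 0 - x j) +
      ∑ i : Fin (m + 1),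
        x i.succ * t ^ (x i.succ - 1) / ∏ j ∈ Finset.univ.erase i.succ, (x i.succ - x j)
  rw [add_assoc, ← Finset.sum_add_distrib,
    Finset.sum_congr rfl (fun k _ => key k), mul_div_assoc]
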